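/- The class of finite trees with vertex degree bound 3 is not almost finite: there exists ε > 0 such that for every K there is a finite tree T of degree bound 3 for which every partition of V(T) into parts of diameter at most K contains a part L with i_T(L) > ε. -/

import Mathlib

/-- The inner vertex boundary of a set `H` in the graph `G`. -/
def gbdry {V : Type*} (G : SimpleGraph V) (H : Set V) : Set V :=
  {x ∈ H | ∃ y, y ∉ H ∧ G.Adj x y}

open SimpleGraph

/-- The heap-indexed complete binary tree on `Fin n`: vertex `x` is adjacent to
`y` iff one is the heap-parent of the other (in 1-based indexing `v ↦ v / 2`). -/
def bt (n : ℕ) : SimpleGraph (Fin n) where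
  Adj x y := x.val + 1 = (y.val + 1) / 2 ∨ y.val + 1 = (x.val + 1) / 2
  symm := ⟨fun x y h => Or.symm h⟩
  loopless := ⟨fun x h => by rcases h with h | h <;> omega⟩

lemma bt_reach {n : ℕ} (hn : 0 < n) (v : Fin n) : (bt n).Reachable v ⟨0, hn⟩ := by
  obtain ⟨k, hk⟩ : ∃ k, v.val ≤ k := ⟨v.val, le_rfl⟩
  induction k generalizing v with
  | zero =>
    have : v = ⟨0, hn⟩ := Fin.ext (show v.val = 0 by omega)
    rw [this]
  | succ k ih =>
    by_cases h0 : v.val = 0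
    · have : v = ⟨0, hn⟩ := Fin.ext (show v.val = 0 by omega)
      rw [this]
    · have hlt : (v.val + 1) / 2 - 1 < n := by have := v.isLt; omega
      set p : Fin n := ⟨(v.val + 1) / 2 - 1, hlt⟩ with hp
      have hadj : (bt n).Adj v p := by
        refine Or.inr ?_
        show p.val + 1 = (v.val + 1) / 2
        simp only [hp]
        omega
      exact (hadj.reachable).trans (ih p (by simp only [hp]; omega))

lemma bt_conn {n : ℕ} (hn : 0 < n) : (bt n).Connected := by
  rw [connected_iff]
  exact ⟨fun u v => (bt_reach hn u).trans (bt_reach hn v).symm, ⟨⟨0, hn⟩⟩⟩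

/-- Step lemma: in the graph with the edge from `x` to its parent `px` deleted,
adjacency preserves the property of being a descendant of `x`. -/
lemma bt_step {n : ℕ} {x px a b : Fin n} (hx : px.val + 1 = (x.val + 1) / 2)
    (h : ((bt n) \ fromEdgeSet {s(x, px)}).Adj a b)
    (ha : ∃ k, (a.val + 1) / 2 ^ k = x.val + 1) :
    ∃ k, (b.val + 1) / 2 ^ k = x.val + 1 := by
  rw [sdiff_adj, fromEdgeSet_adj] at h
  obtain ⟨hab, hne⟩ := h
  have hne' : s(a, b) ≠ s(x, px) := by
    intro hcon
    exact hne ⟨by simp [hcon], hab.ne⟩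
  obtain ⟨k, hk⟩ := ha
  rcases hab with hc | hc
  · refine ⟨k + 1, ?_⟩
    have h2 : (b.val + 1) / 2 ^ (k + 1) = ((b.val + 1) / 2) / 2 ^ k := by
      rw [Nat.div_div_eq_div_mul, ← pow_succ']
    rw [h2, ← hc, hk]
  · cases k with
    | zero =>
      exfalso
      simp only [pow_zero, Nat.div_one] at hk
      have hax : a = x := Fin.ext (by omega)
      have hbx : b = px := Fin.ext (by omega)
      exact hne' (by rw [hax, hbx])
    | succ k =>
      refine ⟨k, ?_⟩
      have h2 : (a.val + 1) / 2 ^ (k + 1) = ((a.val + 1) / 2) / 2 ^ k := by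
        rw [Nat.div_div_eq_div_mul, ← pow_succ']
      rw [hc, ← h2, hk]

lemma bt_walk_anc {n : ℕ} {x px : Fin n} (hx : px.val + 1 = (x.val + 1) / 2) :
    ∀ {u w : Fin n}, ((bt n) \ fromEdgeSet {s(x, px)}).Walk u w →
      (∃ k, (u.val + 1) / 2 ^ k = x.val + 1) → ∃ k, (w.val + 1) / 2 ^ k = x.val + 1 := by
  intro u w p
  induction p with
  | nil => exact id
  | cons h p ih => exact fun ha => ih (bt_step hx h ha)

lemma bt_not_reach {n : ℕ} {x px : Fin n} (hx : px.val + 1 = (x.val + 1) / 2)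
    (hr : ((bt n) \ fromEdgeSet {s(x, px)}).Reachable x px) : False := by
  obtain ⟨p⟩ := hr
  obtain ⟨k, hk⟩ := bt_walk_anc hx p ⟨0, by simp⟩
  have h1 : (px.val + 1) / 2 ^ k ≤ px.val + 1 := Nat.div_le_self _ _
  omega

lemma bt_acyclic (n : ℕ) : (bt n).IsAcyclic := by
  rw [isAcyclic_iff_forall_adj_isBridge]
  intro v w hvw
  rcases hvw with hc | hc
  · rw [Sym2.eq_swap, isBridge_iff]
    exact fun hr => bt_not_reach hc hr
  · rw [isBridge_iff]
    exact fun hr => bt_not_reach hc hr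

lemma bt_isTree {n : ℕ} (hn : 0 < n) : (bt n).IsTree :=
  ⟨bt_conn hn, bt_acyclic n⟩

/-- Every vertex of `bt n` has at most `3` neighbours: the parent and the two
children. -/
lemma bt_deg {n : ℕ} (v : Fin n) : ((bt n).neighborSet v).ncard ≤ 3 := by
  classical
  have hp : (v.val + 1) / 2 - 1 < n := by have := v.isLt; omega
  set p : Fin n := ⟨(v.val + 1) / 2 - 1, hp⟩ with hpdef
  set c : Fin n := if h : 2 * v.val + 1 < n then ⟨2 * v.val + 1, h⟩ else v with hcdef
  set d : Fin n := if h : 2 * v.val + 2 < n then ⟨2 * v.val + 2, h⟩ else v with hddef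
  have hsub : (bt n).neighborSet v ⊆ {p, c, d} := by
    intro y hy
    rcases hy with hc | hc
    · have : y.val = 2 * v.val + 1 ∨ y.val = 2 * v.val + 2 := by omega
      rcases this with h1 | h1
      · have hlt : 2 * v.val + 1 < n := by rw [← h1]; exact y.isLt
        have : y = c := by rw [hcdef, dif_pos hlt]; exact Fin.ext h1
        exact Or.inr (Or.inl this)
      · have hlt : 2 * v.val + 2 < n := by rw [← h1]; exact y.isLt
        have : y = d := by rw [hddef, dif_pos hlt]; exact Fin.ext h1
        exact Or.inr (Or.inr this)
    · left
      exact Fin.ext (show y.val = (v.val + 1) / 2 - 1 by omega)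
  calc ((bt n).neighborSet v).ncard ≤ ({p, c, d} : Set (Fin n)).ncard :=
        Set.ncard_le_ncard hsub (Set.toFinite _)
    _ ≤ ({c, d} : Set (Fin n)).ncard + 1 := Set.ncard_insert_le _ _
    _ ≤ (({d} : Set (Fin n)).ncard + 1) + 1 :=
        Nat.add_le_add_right (Set.ncard_insert_le _ _) 1
    _ ≤ 3 := by rw [Set.ncard_singleton]

/-- Adjacency increases the depth `Nat.log 2 (v + 1)` by at most one. -/
lemma bt_adj_log {n : ℕ} {a b : Fin n} (h : (bt n).Adj a b) :
    Nat.log 2 (b.val + 1) ≤ Nat.log 2 (a.val + 1) + 1 := by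
  rcases h with hc | hc
  · have h2 : a.val + 1 < 2 ^ (Nat.log 2 (a.val + 1) + 1) :=
      Nat.lt_pow_succ_log_self one_lt_two _
    have h3 : b.val + 1 < 2 ^ (Nat.log 2 (a.val + 1) + 2) := by
      have hps : (2:ℕ) ^ (Nat.log 2 (a.val + 1) + 2) = 2 ^ (Nat.log 2 (a.val + 1) + 1) * 2 :=
        pow_succ 2 _
      omega
    have := Nat.log_lt_of_lt_pow (show b.val + 1 ≠ 0 by omega) h3
    omega
  · exact le_trans (Nat.log_mono_right (by omega)) (Nat.le_succ _)

lemma bt_walk_log {n : ℕ} {a b : Fin n} (w : (bt n).Walk a b) :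
    Nat.log 2 (b.val + 1) ≤ Nat.log 2 (a.val + 1) + w.length := by
  induction w with
  | nil => simp
  | cons h p ih =>
    rw [Walk.length_cons]
    have := bt_adj_log h
    omega

/-- The class of finite trees with vertex degree bound `3` is not almost
finite: there is `ε > 0` such that for every `K` some finite tree of degree
bound `3` admits no partition into parts of diameter at most `K` all of whose
parts have isoperimetric constant at most `ε`. -/
theorem finite_trees_not_almost_finite :
    ∃ ε : ℝ, 0 < ε ∧ ∀ K : ℕ, ∃ n : ℕ, ∃ T : SimpleGraph (Fin n),
      T.IsTree ∧
      (∀ v, (T.neighborSet v).ncard ≤ 3) ∧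
      ∀ P : Fin n → Set (Fin n),
        (∀ x, x ∈ P x) →
        (∀ x y, y ∈ P x → P y = P x) →
        (∀ x, ∀ y ∈ P x, ∀ z ∈ P x, T.dist y z ≤ K) →
        ∃ x, ε * ((P x).ncard : ℝ) < ((gbdry T (P x)).ncard : ℝ) := by
  classical
  refine ⟨1/2, by norm_num, ?_⟩
  intro K
  have h4 : 4 ≤ 2 ^ (K + 2) := by
    calc (4:ℕ) = 2 ^ 2 := rfl
    _ ≤ 2 ^ (K + 2) := Nat.pow_le_pow_right (by norm_num) (by omega)
  refine ⟨2 ^ (K + 2) - 1, ?_⟩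
  set n := 2 ^ (K + 2) - 1 with hndef
  have hn : 0 < n := by omega
  refine ⟨bt n, bt_isTree hn, fun v => bt_deg v, ?_⟩
  intro P hP1 _hP2 hP3
  set r : Fin n := ⟨0, hn⟩ with hrdef
  refine ⟨r, ?_⟩
  set L := P r with hL
  set B := gbdry (bt n) L with hB
  -- Step A : all vertices of `L` are shallow, since `L` has diameter at most `K`
  have hA : ∀ x ∈ L, x.val + 1 < 2 ^ (K + 1) := by
    intro x hx
    have hd : (bt n).dist r x ≤ K := hP3 r r (hP1 r) x hx
    obtain ⟨w, hw⟩ := (bt_conn hn).exists_walk_length_eq_dist r x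
    have hlog0 : Nat.log 2 (r.val + 1) = 0 := Nat.log_one_right 2
    have h1 := bt_walk_log w
    have hlogK : Nat.log 2 (x.val + 1) ≤ K := by omega
    have h2 : x.val + 1 < 2 ^ (Nat.log 2 (x.val + 1) + 1) :=
      Nat.lt_pow_succ_log_self one_lt_two _
    have h3 : (2:ℕ) ^ (Nat.log 2 (x.val + 1) + 1) ≤ 2 ^ (K + 1) :=
      Nat.pow_le_pow_right (by norm_num) (by omega)
    omega
  have hpow : 2 ^ (K + 2) = 2 * 2 ^ (K + 1) := by ring
  -- hence every vertex of `L` has both children present in the graph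
  have hchild : ∀ x ∈ L, 2 * x.val + 2 < n := by
    intro x hx
    have := hA x hx
    omega
  set c : Fin n → Fin n := fun x => if h : 2 * x.val + 1 < n then ⟨2 * x.val + 1, h⟩ else x
    with hcdef
  set d : Fin n → Fin n := fun x => if h : 2 * x.val + 2 < n then ⟨2 * x.val + 2, h⟩ else x
    with hddef
  have hcval : ∀ x ∈ L, (c x).val = 2 * x.val + 1 := by
    intro x hx
    have h := hchild x hx
    rw [hcdef]
    simp only
    rw [dif_pos (by omega : 2 * x.val + 1 < n)]
  have hdval : ∀ x ∈ L, (d x).val = 2 * x.val + 2 := by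
    intro x hx
    have h := hchild x hx
    rw [hddef]
    simp only
    rw [dif_pos h]
  have hBL : B ⊆ L := fun x hx => hx.1
  -- both children of any non-boundary vertex of `L` belong to `L` (and are not the root)
  have hmem : ∀ x ∈ L \ B, c x ∈ L \ {r} ∧ d x ∈ L \ {r} := by
    rintro x ⟨hxL, hxB⟩
    have hcv := hcval x hxL
    have hdv := hdval x hxL
    have hadjc : (bt n).Adj x (c x) := Or.inl (by omega)
    have hadjd : (bt n).Adj x (d x) := Or.inl (by omega)
    have hcL : c x ∈ L := by
      by_contra hcon
      exact hxB ⟨hxL, c x, hcon, hadjc⟩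
    have hdL : d x ∈ L := by
      by_contra hcon
      exact hxB ⟨hxL, d x, hcon, hadjd⟩
    refine ⟨⟨hcL, ?_⟩, ⟨hdL, ?_⟩⟩
    · intro hcon
      rw [Set.mem_singleton_iff] at hcon
      have : (c x).val = 0 := by rw [hcon]
      omega
    · intro hcon
      rw [Set.mem_singleton_iff] at hcon
      have : (d x).val = 0 := by rw [hcon]
      omega
  -- the child maps are injective on `L \ B` and have disjoint images
  have hinjc : Set.InjOn c (L \ B) := by
    rintro x ⟨hx, _⟩ y ⟨hy, _⟩ hxy
    have h1 := hcval x hx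
    have h2 := hcval y hy
    exact Fin.ext (by rw [hxy] at h1; omega)
  have hinjd : Set.InjOn d (L \ B) := by
    rintro x ⟨hx, _⟩ y ⟨hy, _⟩ hxy
    have h1 := hdval x hx
    have h2 := hdval y hy
    exact Fin.ext (by rw [hxy] at h1; omega)
  have hdisj : Disjoint (c '' (L \ B)) (d '' (L \ B)) := by
    rw [Set.disjoint_left]
    rintro z ⟨x, ⟨hx, _⟩, hxz⟩ ⟨y, ⟨hy, _⟩, hyz⟩
    have h1 := hcval x hx
    have h2 := hdval y hy
    rw [hxz] at h1
    rw [hyz] at h2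
    omega
  have hsub : c '' (L \ B) ∪ d '' (L \ B) ⊆ L \ {r} := by
    rintro z (⟨x, hx, hxz⟩ | ⟨x, hx, hxz⟩)
    · exact hxz ▸ (hmem x hx).1
    · exact hxz ▸ (hmem x hx).2
  -- cardinality bookkeeping: `2 * |L \ B| ≤ |L| - 1`
  have hLfin : L.Finite := Set.toFinite _
  have hcard1 : (c '' (L \ B) ∪ d '' (L \ B)).ncard ≤ (L \ {r}).ncard :=
    Set.ncard_le_ncard hsub (Set.toFinite _)
  have hcard2 : (c '' (L \ B) ∪ d '' (L \ B)).ncard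
      = (c '' (L \ B)).ncard + (d '' (L \ B)).ncard :=
    Set.ncard_union_eq hdisj (Set.toFinite _) (Set.toFinite _)
  have hcard3 : (c '' (L \ B)).ncard = (L \ B).ncard := Set.ncard_image_of_injOn hinjc
  have hcard4 : (d '' (L \ B)).ncard = (L \ B).ncard := Set.ncard_image_of_injOn hinjd
  have hcard5 : (L \ {r}).ncard = L.ncard - 1 :=
    Set.ncard_diff_singleton_of_mem (hP1 r)
  have hcard6 : (L \ B).ncard = L.ncard - B.ncard := Set.ncard_diff hBL (Set.toFinite _)
  have hcard7 : B.ncard ≤ L.ncard := Set.ncard_le_ncard hBL hLfin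
  have hLpos : 1 ≤ L.ncard := by
    rw [Nat.one_le_iff_ne_zero]
    intro hcon
    have hemp := (Set.ncard_eq_zero hLfin).mp hcon
    have hrL : r ∈ L := hP1 r
    rw [hemp] at hrL
    exact hrL
  have hcast : (L.ncard : ℝ) < 2 * (B.ncard : ℝ) := by
    have : L.ncard < 2 * B.ncard := by omega
    exact_mod_cast this
  linarith
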